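/- The polynomials ψ_g with g ∈ G_{k,n,D} are all nonzero, are ℂ-linearly independent, and generate the power ideal I_{n,k,d}; in particular they form a minimal generating set of I_{n,k,d}. -/

import Mathlib

open MvPolynomial

/-- The weight of a vector `g ∈ (ℤ/kℤ)^m`: the sum of the representatives of
its entries in `{0,…,k−1}`. -/
def wt {m k : ℕ} (g : Fin m → ZMod k) : ℕ := ∑ l, (g l).val

/-- `φ_g = (Σ_l ξ^{g_l} x_l)^D`. -/
noncomputable def phi (n k D : ℕ) (ξ : ℂ) (g : Fin (n+1) → ZMod k) :
    MvPolynomial (Fin (n+1)) ℂ :=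
  (∑ l, C (ξ ^ (g l).val) * X l) ^ D

/-- `ψ_g`, the multicyclic-degree-`g` component of `(x₀+…+xₙ)^D`. -/
noncomputable def psi (n k D : ℕ) (g : Fin (n+1) → ZMod k) :
    MvPolynomial (Fin (n+1)) ℂ :=
  ∑ a ∈ (Finset.Nat.antidiagonalTuple (n+1) D).filter
      (fun a => ∀ l, ((a l : ZMod k) = g l)),
    (Nat.multinomial Finset.univ a : ℂ) •
      monomial (Finsupp.equivFunOnFinite.symm a) (1 : ℂ)

/-- The power ideal `I_{n,k,d}`, generated by the `k^n` forms
`(x₀+ξ^{g₁}x₁+…+ξ^{gₙ}xₙ)^{(k−1)d}`. -/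
noncomputable def powerIdeal (n k d : ℕ) (ξ : ℂ) :
    Ideal (MvPolynomial (Fin (n+1)) ℂ) :=
  Ideal.span { p | ∃ g : Fin (n+1) → ZMod k, g 0 = 0 ∧ p = phi n k ((k-1)*d) ξ g }

section Aux

variable {k : ℕ}

lemma pow_natMod (ζ : ℂ) (hζ : ζ ^ k = 1) (m : ℕ) : ζ ^ (m % k) = ζ ^ m := by
  conv_rhs => rw [← Nat.div_add_mod m k]
  rw [pow_add, pow_mul, hζ, one_pow, one_mul]

lemma pow_val_add [NeZero k] (ζ : ℂ) (hζ : ζ ^ k = 1) (a b : ZMod k) :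
    ζ ^ (a + b).val = ζ ^ a.val * ζ ^ b.val := by
  rw [ZMod.val_add, pow_natMod ζ hζ, pow_add]

lemma pow_val_natCast [NeZero k] (ζ : ℂ) (hζ : ζ ^ k = 1) (m : ℕ) :
    ζ ^ ((m : ZMod k)).val = ζ ^ m := by
  rw [ZMod.val_natCast, pow_natMod ζ hζ]

lemma wt_cast [NeZero k] {m : ℕ} (g : Fin m → ZMod k) :
    ((wt g : ℕ) : ZMod k) = ∑ l, g l := by
  rw [wt, Nat.cast_sum]
  exact Finset.sum_congr rfl fun l _ => by rw [ZMod.natCast_val, ZMod.cast_id]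

lemma exists_rep [NeZero k] {n D : ℕ} {g : Fin (n+1) → ZMod k}
    (hg : ∃ j : ℕ, D = wt g + k * j) :
    ∃ b : Fin (n+1) → ℕ, (∑ l, b l) = D ∧ ∀ l, ((b l : ZMod k) = g l) := by
  obtain ⟨j, hj⟩ := hg
  refine ⟨fun l => (g l).val + if l = 0 then k * j else 0, ?_, ?_⟩
  · rw [Finset.sum_add_distrib, Finset.sum_ite_eq' Finset.univ (0 : Fin (n+1))
      (fun _ => k * j), if_pos (Finset.mem_univ _), hj, wt]
  · intro l
    by_cases hl : l = 0 <;>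
      simp [hl, ZMod.natCast_val, ZMod.cast_id, ZMod.natCast_self]

lemma mem_rep [NeZero k] {n D : ℕ} {g : Fin (n+1) → ZMod k} {a : Fin (n+1) → ℕ}
    (h1 : (∑ l, a l) = D) (h2 : ∀ l, ((a l : ZMod k) = g l)) :
    ∃ j : ℕ, D = wt g + k * j := by
  refine ⟨∑ l, a l / k, ?_⟩
  rw [wt, Finset.mul_sum, ← Finset.sum_add_distrib, ← h1]
  refine Finset.sum_congr rfl fun l _ => ?_
  have hval : (g l).val = a l % k := by rw [← h2 l, ZMod.val_natCast]
  rw [hval, Nat.mod_add_div]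

end Aux

section Psi

variable {n k D : ℕ} [NeZero k]

lemma coeff_psi (g : Fin (n+1) → ZMod k) (b : Fin (n+1) → ℕ) :
    coeff (Finsupp.equivFunOnFinite.symm b) (psi n k D g) =
      if (∑ l, b l) = D ∧ (∀ l, ((b l : ZMod k) = g l)) then
        (Nat.multinomial Finset.univ b : ℂ) else 0 := by
  classical
  rw [psi, coeff_sum]
  simp only [coeff_smul, coeff_monomial, EquivLike.apply_eq_iff_eq, smul_eq_mul,
    mul_ite, mul_one, mul_zero]
  rw [Finset.sum_ite_eq' _ b (fun a => (Nat.multinomial Finset.univ a : ℂ))]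
  congr 1
  simp [Finset.Nat.mem_antidiagonalTuple]

lemma psi_ne_zero {g : Fin (n+1) → ZMod k} (hg : ∃ j : ℕ, D = wt g + k * j) :
    psi n k D g ≠ 0 := by
  obtain ⟨b, hb1, hb2⟩ := exists_rep hg
  intro h0
  have := congrArg (coeff (Finsupp.equivFunOnFinite.symm b)) h0
  rw [coeff_psi, if_pos ⟨hb1, hb2⟩, coeff_zero, Nat.cast_eq_zero] at this
  exact (Nat.multinomial_pos _ _).ne' this

lemma psi_eq_zero {g : Fin (n+1) → ZMod k} (hg : ¬ ∃ j : ℕ, D = wt g + k * j) :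
    psi n k D g = 0 := by
  rw [psi]
  have : (Finset.Nat.antidiagonalTuple (n+1) D).filter
      (fun a => ∀ l, ((a l : ZMod k) = g l)) = ∅ := by
    refine Finset.eq_empty_of_forall_notMem fun a ha => ?_
    rw [Finset.mem_filter, Finset.Nat.mem_antidiagonalTuple] at ha
    exact hg (mem_rep ha.1 ha.2)
  rw [this, Finset.sum_empty]

end Psi

section Expand

variable {n k D : ℕ} [NeZero k] {ξ : ℂ}

lemma phi_expand (hζ : ξ ^ k = 1) (g : Fin (n+1) → ZMod k) :
    phi n k D ξ g = ∑ h : Fin (n+1) → ZMod k,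
      C (∏ l, ξ ^ ((g l).val * (h l).val)) * psi n k D h := by
  classical
  have hterm : ∀ a : Fin (n+1) → ℕ,
      ((Nat.multinomial Finset.univ a : ℕ) : MvPolynomial (Fin (n+1)) ℂ) *
        ∏ l, (C (ξ ^ (g l).val) * X l) ^ a l
      = C (∏ l, (ξ ^ (g l).val) ^ a l) *
        ((Nat.multinomial Finset.univ a : ℂ) •
          monomial (Finsupp.equivFunOnFinite.symm a) (1:ℂ)) := by
    intro a
    rw [monomial_eq, C_1, one_mul, Finsupp.prod_pow, MvPolynomial.smul_eq_C_mul,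
      show ((Nat.multinomial Finset.univ a : ℕ) : MvPolynomial (Fin (n+1)) ℂ)
        = C ((Nat.multinomial Finset.univ a : ℕ) : ℂ) from (map_natCast _ _).symm]
    simp only [Finsupp.coe_equivFunOnFinite_symm, mul_pow,
      Finset.prod_mul_distrib, ← map_pow (C : ℂ →+* _), ← map_prod (C : ℂ →+* _)]
    ring
  have hfib : ∀ F : (Fin (n+1) → ℕ) → MvPolynomial (Fin (n+1)) ℂ,
      (∑ h : Fin (n+1) → ZMod k, ∑ a ∈ (Finset.Nat.antidiagonalTuple (n+1) D).filter
        (fun a => ∀ l, ((a l : ZMod k) = h l)), F a)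
        = ∑ a ∈ Finset.Nat.antidiagonalTuple (n+1) D, F a := by
    intro F
    rw [← Finset.sum_fiberwise (Finset.Nat.antidiagonalTuple (n+1) D)
      (fun a => (fun l => ((a l : ZMod k)))) F]
    exact Finset.sum_congr rfl fun h _ => Finset.sum_congr
      (Finset.filter_congr fun a _ => by simp [_root_.funext_iff]) fun _ _ => rfl
  have hR : ∀ h : Fin (n+1) → ZMod k,
      C (∏ l, ξ ^ ((g l).val * (h l).val)) * psi n k D h
      = ∑ a ∈ (Finset.Nat.antidiagonalTuple (n+1) D).filter
          (fun a => ∀ l, ((a l : ZMod k) = h l)),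
        C (∏ l, (ξ ^ (g l).val) ^ a l) *
          ((Nat.multinomial Finset.univ a : ℂ) •
            monomial (Finsupp.equivFunOnFinite.symm a) (1:ℂ)) := by
    intro h
    rw [psi, Finset.mul_sum]
    refine Finset.sum_congr rfl fun a ha => ?_
    rw [Finset.mem_filter] at ha
    have harg : (∏ l, ξ ^ ((g l).val * (h l).val)) = ∏ l, (ξ ^ (g l).val) ^ a l := by
      refine Finset.prod_congr rfl fun l _ => ?_
      have hζl : (ξ ^ (g l).val) ^ k = 1 := by rw [← pow_mul, mul_comm, pow_mul, hζ, one_pow]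
      rw [← ha.2 l, pow_mul, pow_val_natCast _ hζl]
    rw [harg]
  rw [phi, Finset.sum_pow_eq_sum_piAntidiag, Finset.piAntidiag_univ_fin_eq_antidiagonalTuple]
  simp only [hR]
  rw [hfib]
  exact Finset.sum_congr rfl fun a _ => hterm a

end Expand

section Orth

variable {k : ℕ} [NeZero k] {ξ : ℂ}

lemma orth_single (hk : 2 ≤ k) (hξ : IsPrimitiveRoot ξ k) (c : ZMod k) :
    ∑ t : ZMod k, ξ ^ (c.val * t.val) = if c = 0 then (k : ℂ) else 0 := by
  have hre : ∑ t : ZMod k, ξ ^ (c.val * t.val) = ∑ i ∈ Finset.range k, (ξ ^ c.val) ^ i := by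
    refine Finset.sum_nbij' (fun t => t.val) (fun i => (i : ZMod k)) ?_ ?_ ?_ ?_ ?_
    · intro t _; exact Finset.mem_range.2 (ZMod.val_lt t)
    · intro i _; exact Finset.mem_univ _
    · intro t _; exact ZMod.natCast_rightInverse t
    · intro i hi; exact ZMod.val_cast_of_lt (Finset.mem_range.1 hi)
    · intro t _; rw [pow_mul]
  rw [hre]
  by_cases hc : c = 0
  · subst hc
    simp [ZMod.val_zero]
  · rw [if_neg hc]
    have hne : ξ ^ c.val ≠ 1 := by
      have h1 : 0 < c.val := Nat.pos_of_ne_zero fun h => hc ((ZMod.val_eq_zero c).1 h)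
      exact hξ.pow_ne_one_of_pos_of_lt h1.ne' (ZMod.val_lt c)
    have hpow : (ξ ^ c.val) ^ k = 1 := by
      rw [← pow_mul, mul_comm, pow_mul, hξ.pow_eq_one, one_pow]
    rw [geom_sum_eq hne, hpow, sub_self, zero_div]

lemma orth_tuple {n : ℕ} (hk : 2 ≤ k) (hξ : IsPrimitiveRoot ξ k)
    (c : Fin (n+1) → ZMod k) :
    ∑ g' : Fin n → ZMod k,
      ∏ l, ξ ^ (((Fin.cons 0 g' : Fin (n+1) → ZMod k) l).val * (c l).val)
      = if (∀ i : Fin n, c i.succ = 0) then ((k : ℂ)) ^ n else 0 := by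
  have hstep : ∀ g' : Fin n → ZMod k,
      (∏ l, ξ ^ (((Fin.cons 0 g' : Fin (n+1) → ZMod k) l).val * (c l).val))
      = ∏ i : Fin n, ξ ^ ((c i.succ).val * (g' i).val) := by
    intro g'
    rw [Fin.prod_univ_succ]
    simp only [Fin.cons_zero, Fin.cons_succ, ZMod.val_zero, zero_mul, pow_zero, one_mul]
    exact Finset.prod_congr rfl fun i _ => by rw [mul_comm]
  simp only [hstep]
  have := Finset.sum_prod_piFinset (Finset.univ : Finset (ZMod k))
    (fun (i : Fin n) (t : ZMod k) => ξ ^ ((c i.succ).val * t.val))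
  rw [Fintype.piFinset_univ] at this
  rw [this]
  by_cases hall : ∀ i : Fin n, c i.succ = 0
  · rw [if_pos hall]
    rw [Finset.prod_congr rfl fun i _ => by rw [orth_single hk hξ, if_pos (hall i)]]
    simp
  · rw [if_neg hall]
    push_neg at hall
    obtain ⟨i, hi⟩ := hall
    exact Finset.prod_eq_zero (Finset.mem_univ i)
      (by rw [orth_single hk hξ, if_neg hi])

end Orth

section Inv

variable {n k D : ℕ} [NeZero k] {ξ : ℂ}

lemma D_cast [NeZero k] {m D : ℕ} {g : Fin m → ZMod k} (hg : ∃ j : ℕ, D = wt g + k * j) :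
    ((D : ℕ) : ZMod k) = ∑ l, g l := by
  obtain ⟨j, rfl⟩ := hg
  rw [Nat.cast_add, Nat.cast_mul, ZMod.natCast_self, zero_mul, add_zero, wt_cast]

lemma inversion (hk : 2 ≤ k) (hξ : IsPrimitiveRoot ξ k)
    {h : Fin (n+1) → ZMod k} (hh : ∃ j : ℕ, D = wt h + k * j) :
    ∑ g' : Fin n → ZMod k,
      C (∏ l, ξ ^ (((Fin.cons 0 g' : Fin (n+1) → ZMod k) l).val * (-(h l)).val)) *
        phi n k D ξ (Fin.cons 0 g')
      = C ((k : ℂ) ^ n) * psi n k D h := by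
  have hζ := hξ.pow_eq_one
  have step1 : ∀ g' : Fin n → ZMod k,
      C (∏ l, ξ ^ (((Fin.cons 0 g' : Fin (n+1) → ZMod k) l).val * (-(h l)).val)) *
        phi n k D ξ (Fin.cons 0 g')
      = ∑ h' : Fin (n+1) → ZMod k,
          C (∏ l, ξ ^ (((Fin.cons 0 g' : Fin (n+1) → ZMod k) l).val * ((h' l - h l)).val)) *
            psi n k D h' := by
    intro g'
    rw [phi_expand hζ, Finset.mul_sum]
    refine Finset.sum_congr rfl fun h' _ => ?_
    rw [← mul_assoc, ← map_mul, ← Finset.prod_mul_distrib]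
    congr 2
    refine Finset.prod_congr rfl fun l _ => ?_
    have hζl : (ξ ^ ((Fin.cons 0 g' : Fin (n+1) → ZMod k) l).val) ^ k = 1 := by
      rw [← pow_mul, mul_comm, pow_mul, hζ, one_pow]
    rw [pow_mul, pow_mul, pow_mul, sub_eq_add_neg, pow_val_add _ hζl, mul_comm]
  simp only [step1]
  rw [Finset.sum_comm]
  simp only [← Finset.sum_mul]
  have step2 : ∀ h' : Fin (n+1) → ZMod k,
      (∑ g' : Fin n → ZMod k,
        C (∏ l, ξ ^ (((Fin.cons 0 g' : Fin (n+1) → ZMod k) l).val * ((h' l - h l)).val)))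
      = if (∀ i : Fin n, h' i.succ = h i.succ) then C ((k:ℂ)^n)
          else (0 : MvPolynomial (Fin (n+1)) ℂ) := by
    intro h'
    rw [← map_sum, orth_tuple hk hξ (fun l => h' l - h l)]
    by_cases hc : ∀ i : Fin n, h' i.succ = h i.succ
    · rw [if_pos fun i => sub_eq_zero.2 (hc i), if_pos hc]
    · rw [if_neg (fun hcc => hc fun i => sub_eq_zero.1 (hcc i)), if_neg hc, map_zero]
  simp only [step2]
  rw [Finset.sum_eq_single h]
  · rw [if_pos fun i => rfl]
  · intro h' _ hne
    by_cases hcond : ∀ i : Fin n, h' i.succ = h i.succ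
    · rw [if_pos hcond]
      have hz : psi n k D h' = 0 := by
        apply psi_eq_zero
        intro hj'
        apply hne
        have e2 : (∑ l, h l) = ∑ l, h' l := (D_cast hh).symm.trans (D_cast hj')
        rw [Fin.sum_univ_succ, Fin.sum_univ_succ,
          Finset.sum_congr rfl fun i (_ : i ∈ Finset.univ) => (hcond i)] at e2
        have h0 : h' 0 = h 0 := (add_right_cancel e2).symm
        funext l
        exact Fin.cases h0 (fun i => hcond i) l
      rw [hz, mul_zero]
    · rw [if_neg hcond, zero_mul]
  · intro habs; exact absurd (Finset.mem_univ h) habs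

end Inv

theorem stmt2 (n k d : ℕ) (hk : 2 ≤ k) (hd : 1 ≤ d) (ξ : ℂ)
    (hξ : IsPrimitiveRoot ξ k) (D : ℕ) (hD : D = (k-1)*d) :
    (∀ g : Fin (n+1) → ZMod k, (∃ j : ℕ, D = wt g + k * j) → psi n k D g ≠ 0) ∧
    (LinearIndependent ℂ
      (fun g : {g : Fin (n+1) → ZMod k // ∃ j : ℕ, D = wt g + k * j} =>
        psi n k D g.1)) ∧
    Ideal.span { p | ∃ g : Fin (n+1) → ZMod k,
        (∃ j : ℕ, D = wt g + k * j) ∧ p = psi n k D g }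
      = powerIdeal n k d ξ := by
  haveI : NeZero k := ⟨by omega⟩
  refine ⟨fun g hg => psi_ne_zero hg, ?_, ?_⟩
  · rw [linearIndependent_iff']
    intro s c hsum i hi
    obtain ⟨b, hb1, hb2⟩ := exists_rep i.2
    have h0 := congrArg (coeff (Finsupp.equivFunOnFinite.symm b)) hsum
    rw [coeff_sum, coeff_zero] at h0
    rw [Finset.sum_eq_single i] at h0
    · rw [coeff_smul, coeff_psi, if_pos ⟨hb1, hb2⟩, smul_eq_mul] at h0
      have hmul : (Nat.multinomial Finset.univ b : ℂ) ≠ 0 :=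
        Nat.cast_ne_zero.2 (Nat.multinomial_pos _ _).ne'
      exact (mul_eq_zero.1 h0).resolve_right hmul
    · intro i' _ hne
      rw [coeff_smul, coeff_psi, if_neg, smul_zero]
      rintro ⟨_, hall⟩
      exact hne (Subtype.ext (funext fun l => ((hall l).symm.trans (hb2 l))))
    · intro hnotmem; exact absurd hi hnotmem
  · apply le_antisymm
    · rw [Ideal.span_le]
      rintro p ⟨h, hh, rfl⟩
      have heq := inversion (n := n) (D := D) hk hξ hh
      have hkn : ((k:ℂ)^n) ≠ 0 := pow_ne_zero _ (Nat.cast_ne_zero.2 (by omega))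
      have hrw : psi n k D h = C (((k:ℂ)^n)⁻¹) * (C ((k:ℂ)^n) * psi n k D h) := by
        rw [← mul_assoc, ← map_mul, inv_mul_cancel₀ hkn, map_one, one_mul]
      rw [SetLike.mem_coe, hrw, ← heq]
      apply Ideal.mul_mem_left
      apply Ideal.sum_mem
      intro g' _
      apply Ideal.mul_mem_left
      unfold powerIdeal
      apply Ideal.subset_span
      exact ⟨Fin.cons 0 g', Fin.cons_zero _ _, by rw [hD]⟩
    · unfold powerIdeal
      rw [Ideal.span_le]
      rintro p ⟨g, hg0, rfl⟩
      rw [SetLike.mem_coe, ← hD, phi_expand hξ.pow_eq_one g]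
      apply Ideal.sum_mem
      intro h _
      by_cases hmem : ∃ j : ℕ, D = wt h + k * j
      · exact Ideal.mul_mem_left _ _ (Ideal.subset_span ⟨h, hmem, rfl⟩)
      · rw [psi_eq_zero hmem, mul_zero]; exact Ideal.zero_mem _
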